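/- Let p be a prime and n a positive integer with n ≢ -2 (mod p) and p | K(n). Then p does not divide K(n+1), K(n+2), and K(n+3). -/

import Mathlib

/-- Kurepa's left factorial. -/
def K (n : ℕ) : ℕ := ∑ k ∈ Finset.range n, k.factorial

theorem kurepa_no_close_pairs (p n : ℕ) (hp : p.Prime) (hn0 : 0 < n) (hnp : n < p)
    (hmod : ¬ (n : ℤ) ≡ -2 [ZMOD p]) (hdvd : p ∣ K n) :
    ¬ p ∣ K (n + 1) ∧ ¬ p ∣ K (n + 2) ∧ ¬ p ∣ K (n + 3) := by
  have hfac : ¬ p ∣ n.factorial := by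
    intro h
    exact absurd (hp.dvd_factorial.mp h) (by omega)
  have hpn2 : ¬ p ∣ n + 2 := by
    intro h
    apply hmod
    have h' : (p : ℤ) ∣ (-2 : ℤ) - n := by
      have : (p : ℤ) ∣ (n : ℤ) + 2 := by exact_mod_cast h
      have := this.neg_right
      simpa [sub_eq_add_neg, neg_add, add_comm] using this
    exact Int.modEq_iff_dvd.mpr h'
  have h1 : K (n + 1) = K n + n.factorial := by
    simp [K, Finset.sum_range_succ]
  have h2 : K (n + 2) = K n + (n + 2) * n.factorial := by
    simp [K, Finset.sum_range_succ, Nat.factorial_succ]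
    ring
  have h3 : K (n + 3) = K n + (n + 2) ^ 2 * n.factorial := by
    simp [K, Finset.sum_range_succ, Nat.factorial_succ]
    ring
  refine ⟨?_, ?_, ?_⟩
  · rw [h1]
    intro h
    exact hfac ((Nat.dvd_add_right hdvd).mp h)
  · rw [h2]
    intro h
    rcases (hp.dvd_mul.mp ((Nat.dvd_add_right hdvd).mp h)) with h' | h'
    · exact hpn2 h'
    · exact hfac h'
  · rw [h3]
    intro h
    have := (Nat.dvd_add_right hdvd).mp h
    rcases hp.dvd_mul.mp this with h' | h'
    · exact hpn2 (hp.dvd_of_dvd_pow h')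
    · exact hfac h'
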